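/- Let n ≥ 2 and T ∈ T_Q with α = max_i (Σ_{r ≤ i} |t_r| − Σ_{r ≤ i'} |t_r|) < 1, and let Q_T be the unique n-quasi-copula with T(Q_T) = Q_T. If T has a negative entry, then Q_T does not induce a signed measure on [0,1]ⁿ: there is no finite signed Borel measure μ on [0,1]ⁿ with μ(B) = V_{Q_T}(B) for every closed n-box B ⊆ [0,1]ⁿ. -/

import Mathlib

open Set MeasureTheory
open scoped ENNReal

noncomputable section

/-- An `n`-quasi-copula on `[0,1]ⁿ`. -/
def IsNQuasiCopula (n : ℕ) (Q : (Fin n → ℝ) → ℝ) : Prop :=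
  (∀ u : Fin n → ℝ, (∀ j, u j ∈ Icc (0:ℝ) 1) → Q u ∈ Icc (0:ℝ) 1) ∧
  (∀ u : Fin n → ℝ, (∀ j, u j ∈ Icc (0:ℝ) 1) → (∃ j, u j = 0) → Q u = 0) ∧
  (∀ u : Fin n → ℝ, (∀ j, u j ∈ Icc (0:ℝ) 1) → ∀ k, (∀ j, j ≠ k → u j = 1) → Q u = u k) ∧
  (∀ u v : Fin n → ℝ, (∀ j, u j ∈ Icc (0:ℝ) 1) → (∀ j, v j ∈ Icc (0:ℝ) 1) →
    (∀ j, u j ≤ v j) → Q u ≤ Q v) ∧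
  (∀ u v : Fin n → ℝ, (∀ j, u j ∈ Icc (0:ℝ) 1) → (∀ j, v j ∈ Icc (0:ℝ) 1) →
    |Q u - Q v| ≤ ∑ j, |u j - v j|)

/-- The `Q`-volume of the `n`-box `Π_j [lo j, hi j]`: the standard alternating-sign sum of
`Q` over the vertices of the box. -/
def nVol (n : ℕ) (Q : (Fin n → ℝ) → ℝ) (lo hi : Fin n → ℝ) : ℝ :=
  ∑ ε : Fin n → Bool,
    (-1 : ℝ) ^ (Finset.univ.filter fun j => ε j = false).card *
      Q (fun j => if ε j then hi j else lo j)

/-- An `n`-copula: an `n`-quasi-copula all of whose box volumes are nonnegative. -/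
def IsNCopula (n : ℕ) (Q : (Fin n → ℝ) → ℝ) : Prop :=
  IsNQuasiCopula n Q ∧
  ∀ lo hi : Fin n → ℝ,
    (∀ j, lo j ∈ Icc (0:ℝ) 1 ∧ hi j ∈ Icc (0:ℝ) 1 ∧ lo j ≤ hi j) → 0 ≤ nVol n Q lo hi

/-- The divisions `0 = a_{j,0} < a_{j,1} < ⋯ < a_{j,m_j} = 1` of `[0,1]`. -/
def IsDivision (n : ℕ) (m : Fin n → ℕ) (a : Fin n → ℕ → ℝ) : Prop :=
  (∀ j, 1 ≤ m j) ∧ (∀ j, a j 0 = 0) ∧ (∀ j, a j (m j) = 1) ∧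
  (∀ j, ∀ k, k < m j → a j k < a j (k + 1))

/-- `T ∈ T_Q`: the array `t` consists of the `B`-volumes of the boxes of the division, for
some `n`-quasi-copula `B`.  (Multi-indices are zero-based: the box of index `i` is
`Π_j [a_{j, i j}, a_{j, i j + 1}]`.) -/
def MemTQ (n : ℕ) (m : Fin n → ℕ) (a : Fin n → ℕ → ℝ)
    (t : ((j : Fin n) → Fin (m j)) → ℝ) : Prop :=
  ∃ B : (Fin n → ℝ) → ℝ, IsNQuasiCopula n B ∧
    ∀ i : (j : Fin n) → Fin (m j),
      t i = nVol n B (fun j => a j (i j : ℕ)) (fun j => a j ((i j : ℕ) + 1))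

/-- The `T`-transformation `T(Q)(u) = Σ_i t_i · Q(r_i(u))`. -/
def TApp (n : ℕ) (m : Fin n → ℕ) (a : Fin n → ℕ → ℝ)
    (t : ((j : Fin n) → Fin (m j)) → ℝ) (Q : (Fin n → ℝ) → ℝ) : (Fin n → ℝ) → ℝ :=
  fun u => ∑ i : (j : Fin n) → Fin (m j),
    t i * Q (fun j =>
      max (min ((u j - a j (i j : ℕ)) / (a j ((i j : ℕ) + 1) - a j (i j : ℕ))) 1) 0)

/-- `Σ_{r ≤ i} |t_r| − Σ_{r ≤ i'} |t_r|`, where `r ≤ i` means `r_h ≤ i_h` for all `h` and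
`i'` is obtained from `i` by decreasing every coordinate by one (empty sums are `0`). -/
def alphaTerm (n : ℕ) (m : Fin n → ℕ) (t : ((j : Fin n) → Fin (m j)) → ℝ)
    (i : (j : Fin n) → Fin (m j)) : ℝ :=
  (∑ r ∈ Finset.univ.filter (fun r : (j : Fin n) → Fin (m j) => ∀ h, r h ≤ i h), |t r|) -
  (∑ r ∈ Finset.univ.filter (fun r : (j : Fin n) → Fin (m j) =>
      ∀ h, (r h : ℕ) < (i h : ℕ)), |t r|)

/-- An open `Q`-null box: an `n`-box `Π_j I_j` with each `I_j` a relatively open interval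
of `[0,1]`, such that every closed `n`-box contained in it has zero `Q`-volume. -/
def NOpenQNull (n : ℕ) (Q : (Fin n → ℝ) → ℝ) (B : Set (Fin n → ℝ)) : Prop :=
  (∃ I : Fin n → Set ℝ, B = Set.pi Set.univ I ∧
    ∀ j, (I j).OrdConnected ∧ ∃ U : Set ℝ, IsOpen U ∧ I j = U ∩ Icc 0 1) ∧
  ∀ lo hi : Fin n → ℝ, (∀ j, lo j ≤ hi j) → Set.Icc lo hi ⊆ B → nVol n Q lo hi = 0

/-- The support of an `n`-quasi-copula: the complement in `[0,1]ⁿ` of the union of all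
open `Q`-null boxes. -/
def suppNQ (n : ℕ) (Q : (Fin n → ℝ) → ℝ) : Set (Fin n → ℝ) :=
  {u | ∀ j, u j ∈ Icc (0:ℝ) 1} \ ⋃₀ {B | NOpenQNull n Q B}

/-- A similarity of `ℝⁿ` with ratio `c ∈ (0,1)` (Euclidean distance). -/
def IsSimilarityN (n : ℕ) (c : ℝ) (S : (Fin n → ℝ) → (Fin n → ℝ)) : Prop :=
  0 < c ∧ c < 1 ∧ ∀ x y : Fin n → ℝ,
    Real.sqrt (∑ j, (S x j - S y j) ^ 2) = c * Real.sqrt (∑ j, (x j - y j) ^ 2)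

/-- A self-similar subset of `ℝⁿ`. -/
def IsSelfSimilarN (n : ℕ) (E : Set (Fin n → ℝ)) : Prop :=
  ∃ (k : ℕ) (S : Fin (k + 1) → (Fin n → ℝ) → (Fin n → ℝ)) (c : Fin (k + 1) → ℝ),
    (∀ j, IsSimilarityN n (c j) (S j)) ∧ E = ⋃ j, S j '' E

end

noncomputable section AuxNSM

lemma sign_eq_prod {n : ℕ} (ε : Fin n → Bool) :
    (-1 : ℝ) ^ (Finset.univ.filter fun j => ε j = false).card
      = ∏ h : Fin n, (if ε h = false then (-1 : ℝ) else 1) := by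
  rw [Finset.prod_ite, Finset.prod_const, Finset.prod_const, one_pow, mul_one]

lemma sign_update {n : ℕ} (ε : Fin n → Bool) (j : Fin n) :
    (∏ h : Fin n, (if Function.update ε j (!ε j) h = false then (-1 : ℝ) else 1))
      = - ∏ h : Fin n, (if ε h = false then (-1 : ℝ) else 1) := by
  rw [← Finset.mul_prod_erase Finset.univ _ (Finset.mem_univ j),
      ← Finset.mul_prod_erase Finset.univ (fun h => if ε h = false then (-1:ℝ) else 1)
        (Finset.mem_univ j)]
  have hrest : ∀ h ∈ Finset.univ.erase j,
      (if Function.update ε j (!ε j) h = false then (-1:ℝ) else 1)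
        = (if ε h = false then (-1:ℝ) else 1) := by
    intro h hh
    rw [Function.update_of_ne (Finset.ne_of_mem_erase hh)]
  rw [Finset.prod_congr rfl hrest, Function.update_self]
  cases hεj : ε j <;> simp

lemma flip_involutive {n : ℕ} (j : Fin n) :
    Function.Involutive (fun ε : Fin n → Bool => Function.update ε j (!ε j)) := by
  intro ε
  funext h
  by_cases hh : h = j
  · subst hh; simp
  · simp [Function.update_of_ne hh]

lemma cancel_sum {n : ℕ} (g : (Fin n → Bool) → ℝ) (j : Fin n)
    (hg : ∀ ε, g (Function.update ε j (!ε j)) = g ε) :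
    ∑ ε : Fin n → Bool,
      (-1 : ℝ) ^ (Finset.univ.filter fun h => ε h = false).card * g ε = 0 := by
  have key : ∑ ε : Fin n → Bool,
      (-1 : ℝ) ^ (Finset.univ.filter fun h => ε h = false).card * g ε
      = ∑ ε : Fin n → Bool,
      -((-1 : ℝ) ^ (Finset.univ.filter fun h => ε h = false).card * g ε) := by
    rw [← Equiv.sum_comp (flip_involutive j).toPerm
      (fun ε => (-1 : ℝ) ^ (Finset.univ.filter fun h => ε h = false).card * g ε)]
    refine Finset.sum_congr rfl fun ε _ => ?_
    show (-1 : ℝ) ^ (Finset.univ.filter fun h => Function.update ε j (!ε j) h = false).card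
        * g (Function.update ε j (!ε j)) = _
    rw [hg, sign_eq_prod, sign_update, ← sign_eq_prod]
    ring
  have := key
  rw [Finset.sum_neg_distrib] at this
  linarith

lemma Q_one {n : ℕ} (hn : 1 ≤ n) {Q : (Fin n → ℝ) → ℝ} (hQ : IsNQuasiCopula n Q) :
    Q (fun _ => 1) = 1 := by
  have := hQ.2.2.1 (fun _ => 1) (by intro j; exact ⟨zero_le_one, le_refl 1⟩)
    ⟨0, hn⟩ (fun j _ => rfl)
  simpa using this

lemma nVol_cube {n : ℕ} (hn : 1 ≤ n) {Q : (Fin n → ℝ) → ℝ} (hQ : IsNQuasiCopula n Q) :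
    nVol n Q (fun _ => 0) (fun _ => 1) = 1 := by
  rw [nVol, Finset.sum_eq_single (fun _ => true)]
  · simp [Q_one hn hQ]
  · intro ε _ hne
    have : ∃ j, ε j = false := by
      by_contra h
      push_neg at h
      exact hne (funext fun j => by simpa using h j)
    obtain ⟨j, hj⟩ := this
    have h0 : Q (fun j => if ε j then (1:ℝ) else 0) = 0 := by
      refine hQ.2.1 _ (fun j => by by_cases h : ε j <;> simp [h]) ⟨j, by simp [hj]⟩
    rw [h0, mul_zero]
  · intro h; exact absurd (Finset.mem_univ _) h

section Main

variable {n : ℕ} {m : Fin n → ℕ} {a : Fin n → ℕ → ℝ}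
variable {t : ((j : Fin n) → Fin (m j)) → ℝ} {Q : (Fin n → ℝ) → ℝ}

/-- the affine map onto cell `i` -/
def phi (a : Fin n → ℕ → ℝ) (i : (j : Fin n) → Fin (m j)) (x : Fin n → ℝ) : Fin n → ℝ :=
  fun j => a j (i j : ℕ) + x j * (a j ((i j : ℕ) + 1) - a j (i j : ℕ))

variable (hdiv : IsDivision n m a)
include hdiv

lemma a_mono : ∀ j : Fin n, ∀ k l : ℕ, k ≤ l → l ≤ m j → a j k ≤ a j l := by
  intro j k l hkl hlm
  induction l with
  | zero => simp_all
  | succ l ih =>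
    rcases Nat.lt_or_ge k (l+1) with h | h
    · have h1 : a j k ≤ a j l := ih (Nat.lt_succ_iff.mp h) (le_trans (Nat.le_succ l) hlm)
      exact le_trans h1 (le_of_lt (hdiv.2.2.2 j l (Nat.lt_of_succ_le hlm)))
    · have : k = l + 1 := le_antisymm hkl h
      simp [this]

lemma a_nonneg : ∀ j : Fin n, ∀ k : ℕ, k ≤ m j → 0 ≤ a j k := by
  intro j k hk
  have := a_mono hdiv j 0 k (Nat.zero_le k) hk
  rw [hdiv.2.1 j] at this; exact this

lemma a_le_one : ∀ j : Fin n, ∀ k : ℕ, k ≤ m j → a j k ≤ 1 := by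
  intro j k hk
  have := a_mono hdiv j k (m j) hk (le_refl _)
  rw [hdiv.2.2.1 j] at this; exact this

lemma delta_pos (i : (j : Fin n) → Fin (m j)) (j : Fin n) :
    0 < a j ((i j : ℕ) + 1) - a j (i j : ℕ) :=
  sub_pos.mpr (hdiv.2.2.2 j (i j) (i j).2)

lemma phi_mem_Icc (i : (j : Fin n) → Fin (m j)) {x : Fin n → ℝ}
    (hx : ∀ j, x j ∈ Icc (0:ℝ) 1) : ∀ j, phi a i x j ∈ Icc (0:ℝ) 1 := by
  intro j
  have hΔ := delta_pos hdiv i j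
  have h0 : 0 ≤ a j (i j : ℕ) := a_nonneg hdiv j _ (le_of_lt (i j).2)
  have h1 : a j ((i j : ℕ) + 1) ≤ 1 := a_le_one hdiv j _ (i j).2
  constructor
  · have : 0 ≤ x j * (a j ((i j : ℕ) + 1) - a j (i j : ℕ)) :=
      mul_nonneg (hx j).1 (le_of_lt hΔ)
    unfold phi; linarith
  · have : x j * (a j ((i j : ℕ) + 1) - a j (i j : ℕ)) ≤
        1 * (a j ((i j : ℕ) + 1) - a j (i j : ℕ)) :=
      mul_le_mul_of_nonneg_right (hx j).2 (le_of_lt hΔ)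
    unfold phi; linarith

variable (hQ : IsNQuasiCopula n Q)
variable (hfix : ∀ u : Fin n → ℝ, (∀ j, u j ∈ Icc (0:ℝ) 1) → TApp n m a t Q u = Q u)
include hQ hfix

/-- key scaling identity -/
lemma nVol_scale (hn : 1 ≤ n) (i : (j : Fin n) → Fin (m j)) (lo hi : Fin n → ℝ)
    (hlo : ∀ j, 0 ≤ lo j) (hlh : ∀ j, lo j ≤ hi j) (hhi : ∀ j, hi j ≤ 1) :
    nVol n Q (phi a i lo) (phi a i hi) = t i * nVol n Q lo hi := by
  have hloI : ∀ j, lo j ∈ Icc (0:ℝ) 1 := fun j => ⟨hlo j, le_trans (hlh j) (hhi j)⟩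
  have hhiI : ∀ j, hi j ∈ Icc (0:ℝ) 1 := fun j => ⟨le_trans (hlo j) (hlh j), hhi j⟩
  -- vertex of image box = phi of vertex
  have hvert : ∀ ε : Fin n → Bool,
      (fun j => if ε j then phi a i hi j else phi a i lo j)
        = phi a i (fun j => if ε j then hi j else lo j) := by
    intro ε; funext j; by_cases h : ε j <;> simp [h, phi]
  have hvmem : ∀ ε : Fin n → Bool, ∀ j,
      phi a i (fun j => if ε j then hi j else lo j) j ∈ Icc (0:ℝ) 1 := by
    intro ε
    exact phi_mem_Icc hdiv i (fun j => by by_cases h : ε j <;> simp [h, hloI j, hhiI j])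
  rw [nVol]
  have hexp : ∀ ε : Fin n → Bool,
      Q (fun j => if ε j then phi a i hi j else phi a i lo j)
        = ∑ r : (j : Fin n) → Fin (m j), t r *
            Q (fun j => max (min ((phi a i (fun j => if ε j then hi j else lo j) j
                - a j (r j : ℕ)) / (a j ((r j : ℕ) + 1) - a j (r j : ℕ))) 1) 0) := by
    intro ε
    rw [hvert ε, ← hfix _ (hvmem ε)]
    rfl
  calc
    ∑ ε : Fin n → Bool, (-1 : ℝ) ^ (Finset.univ.filter fun j => ε j = false).card *
        Q (fun j => if ε j then phi a i hi j else phi a i lo j)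
      = ∑ ε : Fin n → Bool, ∑ r : (j : Fin n) → Fin (m j),
          t r * ((-1 : ℝ) ^ (Finset.univ.filter fun j => ε j = false).card *
          Q (fun j => max (min ((phi a i (fun j => if ε j then hi j else lo j) j
            - a j (r j : ℕ)) / (a j ((r j : ℕ) + 1) - a j (r j : ℕ))) 1) 0)) := by
        refine Finset.sum_congr rfl fun ε _ => ?_
        rw [hexp ε, Finset.mul_sum]
        refine Finset.sum_congr rfl fun r _ => by ring
    _ = ∑ r : (j : Fin n) → Fin (m j), t r * ∑ ε : Fin n → Bool,
          (-1 : ℝ) ^ (Finset.univ.filter fun j => ε j = false).card *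
          Q (fun j => max (min ((phi a i (fun j => if ε j then hi j else lo j) j
            - a j (r j : ℕ)) / (a j ((r j : ℕ) + 1) - a j (r j : ℕ))) 1) 0) := by
        rw [Finset.sum_comm]
        refine Finset.sum_congr rfl fun r _ => ?_
        rw [Finset.mul_sum]
    _ = t i * nVol n Q lo hi := by
        rw [Finset.sum_eq_single i]
        · congr 1
          rw [nVol]
          refine Finset.sum_congr rfl fun ε _ => ?_
          have harg : (fun j => max (min ((phi a i (fun j => if ε j then hi j else lo j) j
              - a j (i j : ℕ)) / (a j ((i j : ℕ) + 1) - a j (i j : ℕ))) 1) 0)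
              = fun j => if ε j then hi j else lo j := by
            funext j
            have hΔ := delta_pos hdiv i j
            have hw : (if ε j then hi j else lo j) ∈ Icc (0:ℝ) 1 := by
              by_cases h : ε j <;> simp [h, hloI j, hhiI j]
            have : (phi a i (fun j => if ε j then hi j else lo j) j - a j (i j : ℕ)) /
                (a j ((i j : ℕ) + 1) - a j (i j : ℕ)) = (if ε j then hi j else lo j) := by
              unfold phi
              field_simp
              ring
            rw [this, min_eq_left hw.2, max_eq_left hw.1]
          rw [harg]
        · -- r ≠ i terms vanish
          intro r _ hri
          have hex : ∃ j0, r j0 ≠ i j0 := by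
            by_contra h; push_neg at h; exact hri (funext h)
          obtain ⟨j0, hj0⟩ := hex
          have hΔr := delta_pos hdiv r j0
          have hΔi := delta_pos hdiv i j0
          have hb0 : ∀ ε' : Fin n → Bool, 0 ≤ (if ε' j0 then hi j0 else lo j0) := by
            intro ε'
            by_cases h : ε' j0
            · rw [if_pos h]; exact le_trans (hlo j0) (hlh j0)
            · rw [if_neg h]; exact hlo j0
          have hb1 : ∀ ε' : Fin n → Bool, (if ε' j0 then hi j0 else lo j0) ≤ 1 := by
            intro ε'
            by_cases h : ε' j0
            · rw [if_pos h]; exact hhi j0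
            · rw [if_neg h]; exact le_trans (hlh j0) (hhi j0)
          have hcc : ∃ c : ℝ, ∀ ε' : Fin n → Bool,
              max (min ((phi a i (fun j => if ε' j then hi j else lo j) j0
                - a j0 (r j0 : ℕ)) / (a j0 ((r j0 : ℕ) + 1) - a j0 (r j0 : ℕ))) 1) 0 = c := by
            rcases Nat.lt_or_ge (r j0 : ℕ) (i j0 : ℕ) with hlt | hge
            · refine ⟨1, fun ε' => ?_⟩
              have h1 : a j0 ((r j0 : ℕ) + 1) ≤ a j0 (i j0 : ℕ) :=
                a_mono hdiv j0 _ _ hlt (le_of_lt (i j0).2)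
              have h2 : a j0 (i j0 : ℕ) ≤
                  phi a i (fun j => if ε' j then hi j else lo j) j0 := by
                have : 0 ≤ (if ε' j0 then hi j0 else lo j0) *
                    (a j0 ((i j0 : ℕ) + 1) - a j0 (i j0 : ℕ)) :=
                  mul_nonneg (hb0 ε') (le_of_lt hΔi)
                unfold phi; linarith
              have : (1:ℝ) ≤ (phi a i (fun j => if ε' j then hi j else lo j) j0
                  - a j0 (r j0 : ℕ)) / (a j0 ((r j0 : ℕ) + 1) - a j0 (r j0 : ℕ)) := by
                rw [le_div_iff₀ hΔr]; linarith
              rw [min_eq_right this]; simp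
            · have hgt : (i j0 : ℕ) < (r j0 : ℕ) := by
                rcases Nat.lt_or_ge (i j0 : ℕ) (r j0 : ℕ) with h | h
                · exact h
                · exact absurd (Fin.ext (le_antisymm h hge)) hj0
              refine ⟨0, fun ε' => ?_⟩
              have h1 : a j0 ((i j0 : ℕ) + 1) ≤ a j0 (r j0 : ℕ) :=
                a_mono hdiv j0 _ _ hgt (le_of_lt (r j0).2)
              have h2 : phi a i (fun j => if ε' j then hi j else lo j) j0
                  ≤ a j0 ((i j0 : ℕ) + 1) := by
                have : (if ε' j0 then hi j0 else lo j0) *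
                    (a j0 ((i j0 : ℕ) + 1) - a j0 (i j0 : ℕ))
                    ≤ 1 * (a j0 ((i j0 : ℕ) + 1) - a j0 (i j0 : ℕ)) :=
                  mul_le_mul_of_nonneg_right (hb1 ε') (le_of_lt hΔi)
                unfold phi; linarith
              have hnum : (phi a i (fun j => if ε' j then hi j else lo j) j0
                  - a j0 (r j0 : ℕ)) / (a j0 ((r j0 : ℕ) + 1) - a j0 (r j0 : ℕ)) ≤ 0 := by
                apply div_nonpos_of_nonpos_of_nonneg
                · linarith
                · exact le_of_lt hΔr
              exact max_eq_right (le_trans (min_le_left _ _) hnum)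
          obtain ⟨c, hc⟩ := hcc
          have hz : (∑ ε : Fin n → Bool,
              (-1 : ℝ) ^ (Finset.univ.filter fun h => ε h = false).card *
              Q (fun j => max (min ((phi a i (fun j => if ε j then hi j else lo j) j
                - a j (r j : ℕ)) / (a j ((r j : ℕ) + 1) - a j (r j : ℕ))) 1) 0)) = 0 := by
            refine cancel_sum _ j0 ?_
            intro ε
            congr 1
            funext h
            by_cases hh : j0 = h
            · subst hh
              rw [hc, hc]
            · simp only [phi]
              rw [Function.update_of_ne (fun hcon => hh hcon.symm)]
          rw [hz, mul_zero]
        · intro h; exact absurd (Finset.mem_univ _) h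

/-- sum of the entries is 1 -/
lemma sum_t_eq_one (hn : 1 ≤ n) : ∑ i : (j : Fin n) → Fin (m j), t i = 1 := by
  have h1 : ∀ j, (fun _ : Fin n => (1:ℝ)) j ∈ Icc (0:ℝ) 1 := fun j => ⟨zero_le_one, le_refl 1⟩
  have := hfix (fun _ => 1) h1
  rw [Q_one hn hQ] at this
  rw [← this, TApp]
  refine Finset.sum_congr rfl fun i _ => ?_
  have harg : (fun j => max (min (((1:ℝ) - a j (i j : ℕ)) /
      (a j ((i j : ℕ) + 1) - a j (i j : ℕ))) 1) 0) = fun _ => (1:ℝ) := by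
    funext j
    have hΔ := delta_pos hdiv i j
    have h2 : a j ((i j : ℕ) + 1) ≤ 1 := a_le_one hdiv j _ (i j).2
    have : (1:ℝ) ≤ (1 - a j (i j : ℕ)) / (a j ((i j : ℕ) + 1) - a j (i j : ℕ)) := by
      rw [le_div_iff₀ hΔ]; linarith
    rw [min_eq_right this]; simp
  rw [harg, Q_one hn hQ, mul_one]

end Main


section Iter

variable {n : ℕ} {m : Fin n → ℕ} {a : Fin n → ℕ → ℝ}
variable {t : ((j : Fin n) → Fin (m j)) → ℝ} {Q : (Fin n → ℝ) → ℝ}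

def Phi (a : Fin n → ℕ → ℝ) : List ((j : Fin n) → Fin (m j)) → (Fin n → ℝ) → (Fin n → ℝ)
  | [], x => x
  | i :: L, x => phi a i (Phi a L x)

variable (hdiv : IsDivision n m a)
include hdiv

lemma Phi_Icc (L : List ((j : Fin n) → Fin (m j))) {x : Fin n → ℝ}
    (hx : ∀ j, x j ∈ Icc (0:ℝ) 1) : ∀ j, Phi a L x j ∈ Icc (0:ℝ) 1 := by
  induction L with
  | nil => exact hx
  | cons i L ih => exact phi_mem_Icc hdiv i ih

lemma Phi_Ioo (L : List ((j : Fin n) → Fin (m j))) {x : Fin n → ℝ}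
    (hx : ∀ j, x j ∈ Ioo (0:ℝ) 1) : ∀ j, Phi a L x j ∈ Ioo (0:ℝ) 1 := by
  induction L with
  | nil => exact hx
  | cons i L ih =>
    intro j
    have hΔ := delta_pos hdiv i j
    have h0 : 0 ≤ a j (i j : ℕ) := a_nonneg hdiv j _ (le_of_lt (i j).2)
    have h1 : a j ((i j : ℕ) + 1) ≤ 1 := a_le_one hdiv j _ (i j).2
    have hy := ih j
    constructor
    · have : 0 < Phi a L x j * (a j ((i j : ℕ) + 1) - a j (i j : ℕ)) :=
        mul_pos hy.1 hΔ
      show 0 < a j (i j : ℕ) + Phi a L x j * _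
      linarith
    · have : Phi a L x j * (a j ((i j : ℕ) + 1) - a j (i j : ℕ)) <
          1 * (a j ((i j : ℕ) + 1) - a j (i j : ℕ)) :=
        mul_lt_mul_of_pos_right hy.2 hΔ
      show a j (i j : ℕ) + Phi a L x j * _ < 1
      linarith

lemma Phi_mono (L : List ((j : Fin n) → Fin (m j))) {x y : Fin n → ℝ}
    (hxy : ∀ j, x j ≤ y j) : ∀ j, Phi a L x j ≤ Phi a L y j := by
  induction L with
  | nil => exact hxy
  | cons i L ih =>
    intro j
    have hΔ := delta_pos hdiv i j
    show a j (i j : ℕ) + Phi a L x j * _ ≤ a j (i j : ℕ) + Phi a L y j * _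
    have := mul_le_mul_of_nonneg_right (ih j) (le_of_lt hΔ)
    linarith

lemma Phi_head_cell (i : (j : Fin n) → Fin (m j)) (L : List ((j : Fin n) → Fin (m j)))
    {lo hi y : Fin n → ℝ} (hlo : ∀ j, lo j ∈ Ioo (0:ℝ) 1) (hhi : ∀ j, hi j ∈ Ioo (0:ℝ) 1)
    (hy : ∀ j, Phi a (i :: L) lo j ≤ y j ∧ y j ≤ Phi a (i :: L) hi j) (j : Fin n) :
    a j (i j : ℕ) < y j ∧ y j < a j ((i j : ℕ) + 1) := by
  have hΔ := delta_pos hdiv i j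
  have hl := (Phi_Ioo hdiv L hlo j).1
  have hh := (Phi_Ioo hdiv L hhi j).2
  have h1 : a j (i j : ℕ) + Phi a L lo j * (a j ((i j : ℕ) + 1) - a j (i j : ℕ)) ≤ y j :=
    (hy j).1
  have h2 : y j ≤ a j (i j : ℕ) + Phi a L hi j * (a j ((i j : ℕ) + 1) - a j (i j : ℕ)) :=
    (hy j).2
  constructor
  · nlinarith
  · nlinarith

lemma Phi_disjoint (lo hi : Fin n → ℝ) (hlo : ∀ j, lo j ∈ Ioo (0:ℝ) 1)
    (hhi : ∀ j, hi j ∈ Ioo (0:ℝ) 1) :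
    ∀ (L L' : List ((j : Fin n) → Fin (m j))), L.length = L'.length → L ≠ L' →
      ∀ y : Fin n → ℝ, (∀ j, Phi a L lo j ≤ y j ∧ y j ≤ Phi a L hi j) →
        (∀ j, Phi a L' lo j ≤ y j ∧ y j ≤ Phi a L' hi j) → False := by
  intro L
  induction L with
  | nil =>
    intro L' hlen hne _ _ _
    cases L' with
    | nil => exact hne rfl
    | cons i' L' => simp at hlen
  | cons i L ih =>
    intro L' hlen hne y hy hy'
    cases L' with
    | nil => simp at hlen
    | cons i' L'' =>
      by_cases hii : i = i'
      · subst hii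
        have hLne : L ≠ L'' := fun h => hne (by rw [h])
        have hlen' : L.length = L''.length := by simpa using hlen
        set z : Fin n → ℝ := fun j => (y j - a j (i j : ℕ)) /
          (a j ((i j : ℕ) + 1) - a j (i j : ℕ)) with hz
        have key : ∀ (M : List ((j : Fin n) → Fin (m j))) (x : Fin n → ℝ) (j : Fin n),
            (a j (i j : ℕ) + Phi a M x j * (a j ((i j : ℕ) + 1) - a j (i j : ℕ)) ≤ y j
              ↔ Phi a M x j ≤ z j) ∧
            (y j ≤ a j (i j : ℕ) + Phi a M x j * (a j ((i j : ℕ) + 1) - a j (i j : ℕ))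
              ↔ z j ≤ Phi a M x j) := by
          intro M x j
          have hΔ := delta_pos hdiv i j
          constructor
          · rw [hz]; simp only []
            rw [le_div_iff₀ hΔ]
            constructor <;> intro h <;> linarith
          · rw [hz]; simp only []
            rw [div_le_iff₀ hΔ]
            constructor <;> intro h <;> linarith
        refine ih L'' hlen' hLne z (fun j => ?_) (fun j => ?_)
        · exact ⟨((key L lo j).1).mp (hy j).1, ((key L hi j).2).mp (hy j).2⟩
        · exact ⟨((key L'' lo j).1).mp (hy' j).1, ((key L'' hi j).2).mp (hy' j).2⟩
      · have : ∃ j0, i j0 ≠ i' j0 := by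
          by_contra h; push_neg at h; exact hii (funext h)
        obtain ⟨j0, hj0⟩ := this
        have hc := Phi_head_cell hdiv i L hlo hhi hy j0
        have hc' := Phi_head_cell hdiv i' L'' hlo hhi hy' j0
        rcases Nat.lt_or_ge (i j0 : ℕ) (i' j0 : ℕ) with hlt | hge
        · have : a j0 ((i j0 : ℕ) + 1) ≤ a j0 (i' j0 : ℕ) :=
            a_mono hdiv j0 _ _ hlt (le_of_lt (i' j0).2)
          linarith [hc.2, hc'.1]
        · have hgt : (i' j0 : ℕ) < (i j0 : ℕ) := by
            rcases Nat.lt_or_ge (i' j0 : ℕ) (i j0 : ℕ) with h | h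
            · exact h
            · exact absurd (Fin.ext (le_antisymm h hge)) hj0
          have : a j0 ((i' j0 : ℕ) + 1) ≤ a j0 (i j0 : ℕ) :=
            a_mono hdiv j0 _ _ hgt (le_of_lt (i j0).2)
          linarith [hc.1, hc'.2]

variable (hQ : IsNQuasiCopula n Q)
variable (hfix : ∀ u : Fin n → ℝ, (∀ j, u j ∈ Icc (0:ℝ) 1) → TApp n m a t Q u = Q u)
include hQ hfix

lemma nVol_Phi (hn : 1 ≤ n) (L : List ((j : Fin n) → Fin (m j))) (lo hi : Fin n → ℝ)
    (hlo : ∀ j, 0 ≤ lo j) (hlh : ∀ j, lo j ≤ hi j) (hhi : ∀ j, hi j ≤ 1) :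
    nVol n Q (Phi a L lo) (Phi a L hi) = (L.map t).prod * nVol n Q lo hi := by
  induction L with
  | nil => simp [Phi]
  | cons i L ih =>
    have hloI : ∀ j, lo j ∈ Icc (0:ℝ) 1 := fun j => ⟨hlo j, le_trans (hlh j) (hhi j)⟩
    have hhiI : ∀ j, hi j ∈ Icc (0:ℝ) 1 := fun j => ⟨le_trans (hlo j) (hlh j), hhi j⟩
    have h1 : ∀ j, 0 ≤ Phi a L lo j := fun j => (Phi_Icc hdiv L hloI j).1
    have h2 : ∀ j, Phi a L lo j ≤ Phi a L hi j := Phi_mono hdiv L hlh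
    have h3 : ∀ j, Phi a L hi j ≤ 1 := fun j => (Phi_Icc hdiv L hhiI j).2
    show nVol n Q (phi a i (Phi a L lo)) (phi a i (Phi a L hi)) = _
    rw [nVol_scale hdiv hQ hfix hn i _ _ h1 h2 h3, ih]
    simp [mul_comm, mul_assoc, mul_left_comm]

end Iter

theorem no_signedMeasure_aux (n : ℕ) (hn : 2 ≤ n) (m : Fin n → ℕ)
    (a : Fin n → ℕ → ℝ) (hdiv : IsDivision n m a) (t : ((j : Fin n) → Fin (m j)) → ℝ)
    (hneg : ∃ i, t i < 0) (Q : (Fin n → ℝ) → ℝ)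
    (hQ : IsNQuasiCopula n Q)
    (hfix : ∀ u : Fin n → ℝ, (∀ j, u j ∈ Icc (0:ℝ) 1) → TApp n m a t Q u = Q u) :
    ¬ ∃ μ : SignedMeasure (Fin n → ℝ),
      ∀ lo hi : Fin n → ℝ,
        (∀ j, lo j ∈ Icc (0:ℝ) 1 ∧ hi j ∈ Icc (0:ℝ) 1 ∧ lo j ≤ hi j) →
        μ (Set.Icc lo hi) = nVol n Q lo hi := by
  rintro ⟨μ, hμ⟩
  have hn1 : 1 ≤ n := le_trans (by norm_num) hn
  obtain ⟨i0, hi0⟩ := hneg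
  -- the total absolute mass of the entries exceeds 1
  set s : ℝ := ∑ i : (j : Fin n) → Fin (m j), |t i| with hs
  have hsum1 : ∑ i : (j : Fin n) → Fin (m j), t i = 1 :=
    sum_t_eq_one hdiv hQ hfix hn1
  have hs1 : 1 < s := by
    have h1 : |t i0| - t i0 ≤ ∑ i : (j : Fin n) → Fin (m j), (|t i| - t i) :=
      Finset.single_le_sum (f := fun i => |t i| - t i)
        (fun i _ => sub_nonneg.mpr (le_abs_self _)) (Finset.mem_univ i0)
    have h2 : ∑ i : (j : Fin n) → Fin (m j), (|t i| - t i) = s - 1 := by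
      rw [Finset.sum_sub_distrib, hsum1]
    nlinarith [abs_nonneg (t i0)]
  have hs0 : 0 < s := lt_trans one_pos hs1
  -- the shrunk cube
  have hnR : (0:ℝ) < n := by exact_mod_cast lt_of_lt_of_le (by norm_num) hn
  set e : ℝ := 1 / (2 ^ (n + 1) * n) with he
  have hepos : 0 < e := by positivity
  have hn2 : (2:ℝ) ≤ (n:ℝ) := by exact_mod_cast hn
  have hehalf : e ≤ 1 / 2 := by
    rw [he, div_le_div_iff₀ (by positivity) (by norm_num)]
    have h2n : (2:ℝ) ≤ 2 ^ (n + 1) := by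
      calc (2:ℝ) = 2 ^ 1 := (pow_one 2).symm
      _ ≤ 2 ^ (n + 1) := by
        apply pow_le_pow_right₀ (by norm_num) (by omega)
    nlinarith [h2n, hn2]
  set lo : Fin n → ℝ := fun _ => e with hlo_def
  set hi : Fin n → ℝ := fun _ => 1 - e with hhi_def
  have hloO : ∀ j, lo j ∈ Ioo (0:ℝ) 1 := fun j => ⟨hepos, by simp [hlo_def]; linarith⟩
  have hhiO : ∀ j, hi j ∈ Ioo (0:ℝ) 1 := by
    intro j; constructor
    · show (0:ℝ) < 1 - e; linarith
    · show (1:ℝ) - e < 1; linarith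
  have hlh : ∀ j, lo j ≤ hi j := fun j => by show e ≤ 1 - e; linarith
  have hloI : ∀ j, lo j ∈ Icc (0:ℝ) 1 := fun j => ⟨le_of_lt (hloO j).1, le_of_lt (hloO j).2⟩
  have hhiI : ∀ j, hi j ∈ Icc (0:ℝ) 1 := fun j => ⟨le_of_lt (hhiO j).1, le_of_lt (hhiO j).2⟩
  set c : ℝ := nVol n Q lo hi with hc_def
  -- c is at least 1/2
  have hcube : nVol n Q (fun _ => 0) (fun _ => 1) = 1 := nVol_cube hn1 hQ
  have hdiff : |nVol n Q lo hi - nVol n Q (fun _ => (0:ℝ)) (fun _ => (1:ℝ))| ≤ 1 / 2 := by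
    rw [nVol, nVol, ← Finset.sum_sub_distrib]
    have hterm : ∀ ε : Fin n → Bool,
        |(-1 : ℝ) ^ (Finset.univ.filter fun j => ε j = false).card *
            Q (fun j => if ε j then hi j else lo j) -
          (-1 : ℝ) ^ (Finset.univ.filter fun j => ε j = false).card *
            Q (fun j => if ε j then (1:ℝ) else 0)| ≤ n * e := by
      intro ε
      rw [← mul_sub, abs_mul, abs_pow, abs_neg, abs_one, one_pow, one_mul]
      have hlip := hQ.2.2.2.2 (fun j => if ε j then hi j else lo j)
        (fun j => if ε j then (1:ℝ) else 0)
        (fun j => by by_cases h : ε j <;> simp [h, hloI j, hhiI j])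
        (fun j => by by_cases h : ε j <;> simp [h])
      refine le_trans hlip ?_
      have : ∀ j : Fin n, |(if ε j then hi j else lo j) - (if ε j then (1:ℝ) else 0)| = e := by
        intro j
        by_cases h : ε j
        · rw [if_pos h, if_pos h]
          show |1 - e - 1| = e
          rw [show (1:ℝ) - e - 1 = -e by ring, abs_neg, abs_of_nonneg hepos.le]
        · rw [if_neg h, if_neg h]
          show |e - 0| = e
          rw [sub_zero, abs_of_nonneg hepos.le]
      rw [Finset.sum_congr rfl (fun j _ => this j), Finset.sum_const]
      simp [mul_comm]
    refine le_trans (Finset.abs_sum_le_sum_abs _ _) ?_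
    refine le_trans (Finset.sum_le_sum fun ε _ => hterm ε) ?_
    rw [Finset.sum_const, Finset.card_univ]
    have hcard : Fintype.card (Fin n → Bool) = 2 ^ n := by simp
    rw [hcard, nsmul_eq_mul]
    have hne : (n:ℝ) ≠ 0 := ne_of_gt hnR
    have hkey : ((2 ^ n : ℕ) : ℝ) * ((n:ℝ) * e) = 1 / 2 := by
      rw [he]
      push_cast
      rw [pow_succ]
      field_simp
    exact le_of_eq hkey
  have hcclose : |c - 1| ≤ 1 / 2 := by
    have heq : |c - 1| = |nVol n Q lo hi - nVol n Q (fun _ => (0:ℝ)) (fun _ => (1:ℝ))| := by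
      rw [hcube, hc_def]
    rw [heq]; exact hdiff
  have hchalf : 1 / 2 ≤ c := by
    have := abs_le.mp hcclose
    linarith [this.1]
  -- Jordan decomposition bound
  set P := μ.toJordanDecomposition.posPart with hP
  set N := μ.toJordanDecomposition.negPart with hN
  have hPN : ∀ A : Set (Fin n → ℝ), MeasurableSet A →
      μ A = (P A).toReal - (N A).toReal := by
    intro A hA
    conv_lhs => rw [← μ.toSignedMeasure_toJordanDecomposition]
    rw [MeasureTheory.JordanDecomposition.toSignedMeasure]
    exact MeasureTheory.Measure.toSignedMeasure_sub_apply hA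
  set M : ℝ := (P univ).toReal + (N univ).toReal with hM
  -- the key bound for every level k
  have key : ∀ k : ℕ, s ^ k * (1 / 2) ≤ M := by
    intro k
    set A : (Fin k → (j : Fin n) → Fin (m j)) → Set (Fin n → ℝ) := fun w =>
      Set.Icc (Phi a (List.ofFn w) lo) (Phi a (List.ofFn w) hi) with hA
    have hmeas : ∀ w, MeasurableSet (A w) := fun w => measurableSet_Icc
    have hdisj : ∀ w w', w ≠ w' → Disjoint (A w) (A w') := by
      intro w w' hne
      rw [Set.disjoint_left]
      intro y hy hy'
      have h1 : ∀ j, Phi a (List.ofFn w) lo j ≤ y j ∧ y j ≤ Phi a (List.ofFn w) hi j := by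
        intro j; exact ⟨hy.1 j, hy.2 j⟩
      have h2 : ∀ j, Phi a (List.ofFn w') lo j ≤ y j ∧ y j ≤ Phi a (List.ofFn w') hi j := by
        intro j; exact ⟨hy'.1 j, hy'.2 j⟩
      exact Phi_disjoint hdiv lo hi hloO hhiO (List.ofFn w) (List.ofFn w')
        (by simp) (fun h => hne (List.ofFn_injective h)) y h1 h2
    have hval : ∀ w, μ (A w) = (∏ l, t (w l)) * c := by
      intro w
      have hb : ∀ j, Phi a (List.ofFn w) lo j ∈ Icc (0:ℝ) 1 ∧
          Phi a (List.ofFn w) hi j ∈ Icc (0:ℝ) 1 ∧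
          Phi a (List.ofFn w) lo j ≤ Phi a (List.ofFn w) hi j := by
        intro j
        exact ⟨Phi_Icc hdiv _ hloI j, Phi_Icc hdiv _ hhiI j, Phi_mono hdiv _ hlh j⟩
      rw [hA]
      rw [hμ _ _ hb]
      rw [nVol_Phi hdiv hQ hfix hn1 (List.ofFn w) lo hi
        (fun j => (hloI j).1) hlh (fun j => (hhiI j).2)]
      rw [List.map_ofFn, List.prod_ofFn]
      rfl
    have habs : ∀ w, |μ (A w)| = (∏ l, |t (w l)|) * c := by
      intro w
      rw [hval w, abs_mul, Finset.abs_prod, abs_of_nonneg (by linarith : (0:ℝ) ≤ c)]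
    have hsum_abs : ∑ w : Fin k → (j : Fin n) → Fin (m j), |μ (A w)| = s ^ k * c := by
      rw [Finset.sum_congr rfl (fun w _ => habs w), ← Finset.sum_mul]
      congr 1
      rw [hs, Fintype.sum_pow (fun i => |t i|) k]
    have hbound : ∑ w : Fin k → (j : Fin n) → Fin (m j), |μ (A w)| ≤ M := by
      have hstep : ∀ w, |μ (A w)| ≤ (P (A w)).toReal + (N (A w)).toReal := by
        intro w
        rw [hPN _ (hmeas w)]
        rw [sub_eq_add_neg]
        refine le_trans (abs_add_le _ _) ?_
        rw [abs_neg, abs_of_nonneg ENNReal.toReal_nonneg, abs_of_nonneg ENNReal.toReal_nonneg]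
      refine le_trans (Finset.sum_le_sum fun w _ => hstep w) ?_
      rw [Finset.sum_add_distrib]
      have hgen : ∀ (ρ : Measure (Fin n → ℝ)) (_ : IsFiniteMeasure ρ),
          ∑ w : Fin k → (j : Fin n) → Fin (m j), (ρ (A w)).toReal ≤ (ρ univ).toReal := by
        intro ρ hρ
        have hd : Set.PairwiseDisjoint
            (↑(Finset.univ : Finset (Fin k → (j : Fin n) → Fin (m j)))) A :=
          fun w _ w' _ hne => hdisj w w' hne
        have := measure_biUnion_finset hd (fun w _ => hmeas w) (μ := ρ)
        rw [← ENNReal.toReal_sum (fun w _ => measure_ne_top ρ _), ← this]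
        exact ENNReal.toReal_mono (measure_ne_top ρ _) (measure_mono (subset_univ _))
      have h1 := hgen P inferInstance
      have h2 := hgen N inferInstance
      rw [hM]
      linarith
    calc s ^ k * (1 / 2) ≤ s ^ k * c :=
          mul_le_mul_of_nonneg_left hchalf (le_of_lt (pow_pos hs0 k))
      _ = ∑ w : Fin k → (j : Fin n) → Fin (m j), |μ (A w)| := hsum_abs.symm
      _ ≤ M := hbound
  obtain ⟨k, hk⟩ := pow_unbounded_of_one_lt (M * 2) hs1
  have := key k
  nlinarith

end AuxNSM

/-- For `T ∈ T_Q` with contraction constant `α < 1` and a negative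
entry, the fixed-point quasi-copula `Q_T` does not induce a signed measure on `[0,1]ⁿ`:
there is no finite signed Borel measure `μ` with `μ(B) = V_{Q_T}(B)` for every closed
`n`-box `B ⊆ [0,1]ⁿ`. -/
theorem TApp_fixedPoint_no_signedMeasure (n : ℕ) (hn : 2 ≤ n) (m : Fin n → ℕ)
    (a : Fin n → ℕ → ℝ) (hdiv : IsDivision n m a) (t : ((j : Fin n) → Fin (m j)) → ℝ)
    (hT : MemTQ n m a t) (α : ℝ)
    (hα : IsGreatest {x : ℝ | ∃ i : (j : Fin n) → Fin (m j), x = alphaTerm n m t i} α)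
    (hα1 : α < 1) (hneg : ∃ i, t i < 0) (Q : (Fin n → ℝ) → ℝ)
    (hQ : IsNQuasiCopula n Q)
    (hfix : ∀ u : Fin n → ℝ, (∀ j, u j ∈ Icc (0:ℝ) 1) → TApp n m a t Q u = Q u) :
    ¬ ∃ μ : SignedMeasure (Fin n → ℝ),
      ∀ lo hi : Fin n → ℝ,
        (∀ j, lo j ∈ Icc (0:ℝ) 1 ∧ hi j ∈ Icc (0:ℝ) 1 ∧ lo j ≤ hi j) →
        μ (Set.Icc lo hi) = nVol n Q lo hi :=
  no_signedMeasure_aux n hn m a hdiv t hneg Q hQ hfix
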